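/- Let m ≥ 1 and let Θ be an m×m real matrix; set A := I − Θ. Assume the kernel of the linear map x ↦ Ax on ℝ^m has dimension 1, let v, κ ∈ ℝ^m be nonzero with Aᵀv = 0, Aκ = 0 and ⟨v, κ⟩ ≠ 0, let G be an m×m real matrix satisfying AGA = A, GAG = G, (AG)ᵀ = AG и (GA)ᵀ = GA, and set P := I − (⟨v,κ⟩)^{−1}·κvᵀ. Then there exists η > 0 such that A + εI is invertible for every real ε with 0 < |ε| < η, and (A + εI)^{−1} − ε^{−1}·(⟨v,κ⟩)^{−1}·κvᵀ converges to P·G·P as ε → 0. -/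

import Mathlib

open Matrix Filter Topology

private lemma aux_mul_vecMulVec {m : ℕ} (A : Matrix (Fin m) (Fin m) ℝ) (a b : Fin m → ℝ) :
    A * vecMulVec a b = vecMulVec (A *ᵥ a) b := by
  ext i j
  simp [mul_apply, vecMulVec_apply, mulVec, dotProduct, Finset.sum_mul, mul_assoc]

private lemma aux_vecMulVec_mul {m : ℕ} (A : Matrix (Fin m) (Fin m) ℝ) (a b : Fin m → ℝ) :
    vecMulVec a b * A = vecMulVec a (Aᵀ *ᵥ b) := by
  ext i j
  simp only [mul_apply, vecMulVec_apply, mulVec, dotProduct, transpose_apply, Finset.mul_sum]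
  exact Finset.sum_congr rfl fun k _ => by ring

private lemma aux_vecMulVec_mul_vecMulVec {m : ℕ} (a b c d : Fin m → ℝ) :
    vecMulVec a b * vecMulVec c d = (b ⬝ᵥ c) • vecMulVec a d := by
  ext i j
  simp only [mul_apply, vecMulVec_apply, Matrix.smul_apply, dotProduct, Finset.sum_mul, smul_eq_mul]
  exact Finset.sum_congr rfl fun k _ => by ring

private lemma aux_vecMulVec_mulVec {m : ℕ} (a b x : Fin m → ℝ) :
    vecMulVec a b *ᵥ x = (b ⬝ᵥ x) • a := by
  ext i
  simp only [mulVec, vecMulVec_apply, dotProduct, Pi.smul_apply, smul_eq_mul, Finset.sum_mul]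
  exact Finset.sum_congr rfl fun k _ => by ring

private lemma aux_vecMulVec_zero {m : ℕ} (b : Fin m → ℝ) :
    vecMulVec (0 : Fin m → ℝ) b = 0 := by
  ext i j; simp [vecMulVec_apply]

private lemma aux_vecMulVec_zero' {m : ℕ} (a : Fin m → ℝ) :
    vecMulVec a (0 : Fin m → ℝ) = 0 := by
  ext i j; simp [vecMulVec_apply]

/-- constant Laurent coefficient of the resolvent at its simple pole.  With
`A = I − Θ`, `dim Ker A = 1`, `Aᵀv = 0`, `Aκ = 0`, `⟨v,κ⟩ ≠ 0`, `G` the Moore–Penrose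
pseudoinverse of `A`, and `P = I − ⟨v,κ⟩⁻¹κvᵀ`, there is `η > 0` such that `A + εI` is
invertible for `0 < |ε| < η` and `(A+εI)⁻¹ − ε⁻¹⟨v,κ⟩⁻¹κvᵀ → P·G·P` as `ε → 0`. -/
theorem stmt_14 (m : ℕ) (hm : 1 ≤ m) (Θ : Matrix (Fin m) (Fin m) ℝ)
    (A : Matrix (Fin m) (Fin m) ℝ) (hA : A = 1 - Θ)
    (hker : Module.finrank ℝ (LinearMap.ker A.mulVecLin) = 1)
    (v κ : Fin m → ℝ) (hv : v ≠ 0) (hκ : κ ≠ 0)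
    (hvA : Aᵀ *ᵥ v = 0) (hκA : A *ᵥ κ = 0) (hvκ : v ⬝ᵥ κ ≠ 0)
    (G : Matrix (Fin m) (Fin m) ℝ)
    (hG1 : A * G * A = A) (hG2 : G * A * G = G)
    (hG3 : (A * G)ᵀ = A * G) (hG4 : (G * A)ᵀ = G * A) :
    let P : Matrix (Fin m) (Fin m) ℝ := 1 - (v ⬝ᵥ κ)⁻¹ • vecMulVec κ v
    (∃ η : ℝ, 0 < η ∧ ∀ ε : ℝ, 0 < |ε| → |ε| < η →
      IsUnit (A + ε • (1 : Matrix (Fin m) (Fin m) ℝ))) ∧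
    Tendsto (fun ε : ℝ =>
        (A + ε • (1 : Matrix (Fin m) (Fin m) ℝ))⁻¹ -
          ε⁻¹ • ((v ⬝ᵥ κ)⁻¹ • vecMulVec κ v))
      (𝓝[≠] 0) (𝓝 (P * G * P)) := by
  intro P
  set Q : Matrix (Fin m) (Fin m) ℝ := (v ⬝ᵥ κ)⁻¹ • vecMulVec κ v with hQdef
  have hPQ : P = 1 - Q := rfl
  -- basic multiplicative identities
  have hAQ : A * Q = 0 := by
    rw [hQdef, Matrix.mul_smul, aux_mul_vecMulVec, hκA, aux_vecMulVec_zero, smul_zero]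
  have hQA : Q * A = 0 := by
    rw [hQdef, Matrix.smul_mul, aux_vecMulVec_mul, hvA, aux_vecMulVec_zero', smul_zero]
  have hQQ : Q * Q = Q := by
    rw [hQdef, Matrix.smul_mul, Matrix.mul_smul, aux_vecMulVec_mul_vecMulVec, smul_smul,
      smul_smul, mul_assoc, inv_mul_cancel₀ hvκ, mul_one]
  have hAP : A * P = A := by rw [hPQ, mul_sub, mul_one, hAQ, sub_zero]
  have hQP : Q * P = 0 := by rw [hPQ, mul_sub, mul_one, hQQ, sub_self]
  have hPplusQ : P + Q = 1 := by rw [hPQ, sub_add_cancel]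
  -- the linear functional ⟨v, ·⟩
  let φ : (Fin m → ℝ) →ₗ[ℝ] ℝ :=
    { toFun := fun x => v ⬝ᵥ x
      map_add' := fun x y => dotProduct_add v x y
      map_smul' := fun c x => by simp [dotProduct_smul] }
  have hφsurj : Function.Surjective φ := by
    intro r
    refine ⟨(r * (v ⬝ᵥ κ)⁻¹) • κ, ?_⟩
    show v ⬝ᵥ ((r * (v ⬝ᵥ κ)⁻¹) • κ) = r
    rw [dotProduct_smul, smul_eq_mul]
    field_simp
  have hrkf := LinearMap.finrank_range_add_finrank_ker A.mulVecLin
  rw [hker, Module.finrank_fin_fun] at hrkf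
  have hrkφ := LinearMap.finrank_range_add_finrank_ker φ
  rw [LinearMap.range_eq_top.mpr hφsurj, finrank_top, Module.finrank_self,
    Module.finrank_fin_fun] at hrkφ
  have hle : LinearMap.range A.mulVecLin ≤ LinearMap.ker φ := by
    rintro x ⟨y, rfl⟩
    show v ⬝ᵥ (A.mulVecLin y) = 0
    show v ⬝ᵥ (A *ᵥ y) = 0
    rw [dotProduct_mulVec, ← mulVec_transpose, hvA, zero_dotProduct]
  have hrange : LinearMap.range A.mulVecLin = LinearMap.ker φ :=
    Submodule.eq_of_le_of_finrank_eq hle (by omega)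
  -- P maps into the range of A
  have hPx : ∀ x : Fin m → ℝ, P *ᵥ x ∈ LinearMap.range A.mulVecLin := by
    intro x
    rw [hrange, LinearMap.mem_ker]
    show v ⬝ᵥ (P *ᵥ x) = 0
    have hPxv : P *ᵥ x = x - (v ⬝ᵥ κ)⁻¹ • ((v ⬝ᵥ x) • κ) := by
      rw [hPQ, hQdef, sub_mulVec, one_mulVec, smul_mulVec, aux_vecMulVec_mulVec]
    rw [hPxv, dotProduct_sub, dotProduct_smul, dotProduct_smul, smul_eq_mul, smul_eq_mul]
    field_simp
    simp
  -- key identity A G P = P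
  have hIAGP : (1 - A * G) * P = 0 := by
    have h : ∀ x : Fin m → ℝ, ((1 - A * G) * P) *ᵥ x = 0 := by
      intro x
      obtain ⟨y, hy⟩ := hPx x
      have hy' : P *ᵥ x = A *ᵥ y := hy.symm
      rw [← mulVec_mulVec, hy', mulVec_mulVec, sub_mul, one_mul, hG1, sub_self, zero_mulVec]
    ext i j
    simpa [mulVec_single] using congrFun (h (Pi.single j 1)) i
  have hAGP : A * G * P = P := by
    have := hIAGP
    rw [sub_mul, one_mul, sub_eq_zero] at this
    exact this.symm
  set B : Matrix (Fin m) (Fin m) ℝ := P * G * P with hBdef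
  have hAB : A * B = P := by
    calc A * (P * G * P) = A * P * G * P := by rw [← mul_assoc, ← mul_assoc]
    _ = P := by rw [hAP, hAGP]
  have hQB : Q * B = 0 := by
    calc Q * (P * G * P) = Q * P * G * P := by rw [← mul_assoc, ← mul_assoc]
    _ = 0 := by rw [hQP, Matrix.zero_mul, Matrix.zero_mul]
  -- the key resolvent identity
  have key : ∀ ε : ℝ, ε ≠ 0 →
      (A + ε • (1 : Matrix (Fin m) (Fin m) ℝ)) * (B + ε⁻¹ • Q) = 1 + ε • B := by
    intro ε hε
    have e1 : A * (ε⁻¹ • Q) = 0 := by rw [Matrix.mul_smul, hAQ, smul_zero]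
    have e2 : (ε • (1 : Matrix (Fin m) (Fin m) ℝ)) * B = ε • B := by
      rw [Matrix.smul_mul, one_mul]
    have e3 : (ε • (1 : Matrix (Fin m) (Fin m) ℝ)) * (ε⁻¹ • Q) = Q := by
      rw [Matrix.smul_mul, one_mul, smul_smul, mul_inv_cancel₀ hε, one_smul]
    calc (A + ε • (1 : Matrix (Fin m) (Fin m) ℝ)) * (B + ε⁻¹ • Q)
        = A * B + A * (ε⁻¹ • Q) +
          ((ε • (1 : Matrix (Fin m) (Fin m) ℝ)) * B +
            (ε • (1 : Matrix (Fin m) (Fin m) ℝ)) * (ε⁻¹ • Q)) := by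
          rw [add_mul, mul_add, mul_add]
    _ = P + (ε • B + Q) := by rw [hAB, e1, e2, e3, add_zero]
    _ = 1 + ε • B := by rw [← hPplusQ]; abel
  -- eventual nonvanishing of det (1 + ε B)
  have hdet : ∀ᶠ ε : ℝ in 𝓝 0, ((1 : Matrix (Fin m) (Fin m) ℝ) + ε • B).det ≠ 0 := by
    have hc : Continuous fun ε : ℝ => ((1 : Matrix (Fin m) (Fin m) ℝ) + ε • B).det :=
      (continuous_const.add (continuous_id.smul continuous_const)).matrix_det
    have h0 : ((1 : Matrix (Fin m) (Fin m) ℝ) + (0 : ℝ) • B).det ≠ 0 := by simp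
    exact hc.continuousAt.eventually_ne h0
  -- invertibility of A + ε for det (1 + ε B) ≠ 0 and ε ≠ 0
  have hunit : ∀ ε : ℝ, ε ≠ 0 → ((1 : Matrix (Fin m) (Fin m) ℝ) + ε • B).det ≠ 0 →
      IsUnit (A + ε • (1 : Matrix (Fin m) (Fin m) ℝ)) := by
    intro ε hε hd
    rw [Matrix.isUnit_iff_isUnit_det, isUnit_iff_ne_zero]
    have hprod : (A + ε • (1 : Matrix (Fin m) (Fin m) ℝ)).det * (B + ε⁻¹ • Q).det
        = ((1 : Matrix (Fin m) (Fin m) ℝ) + ε • B).det := by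
      rw [← Matrix.det_mul, key ε hε]
    intro h0
    rw [h0, zero_mul] at hprod
    exact hd hprod.symm
  constructor
  · obtain ⟨η, hη, hball⟩ := Metric.eventually_nhds_iff.mp hdet
    refine ⟨η, hη, fun ε hε1 hε2 => ?_⟩
    have hε : ε ≠ 0 := by simpa [abs_pos] using hε1
    exact hunit ε hε (hball (by simpa [Real.dist_eq] using hε2))
  · -- the limit
    have heq : ∀ᶠ ε : ℝ in 𝓝[≠] (0 : ℝ),
        (A + ε • (1 : Matrix (Fin m) (Fin m) ℝ))⁻¹ - ε⁻¹ • Q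
          = B * ((1 : Matrix (Fin m) (Fin m) ℝ) + ε • B)⁻¹ := by
      filter_upwards [eventually_nhdsWithin_of_eventually_nhds hdet,
        self_mem_nhdsWithin] with ε hd hε
      replace hε : ε ≠ 0 := hε
      have hdu : IsUnit ((1 : Matrix (Fin m) (Fin m) ℝ) + ε • B).det :=
        isUnit_iff_ne_zero.mpr hd
      have hinv1 : ((1 : Matrix (Fin m) (Fin m) ℝ) + ε • B) *
          ((1 : Matrix (Fin m) (Fin m) ℝ) + ε • B)⁻¹ = 1 := Matrix.mul_nonsing_inv _ hdu
      have hright : (A + ε • (1 : Matrix (Fin m) (Fin m) ℝ)) *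
          ((B + ε⁻¹ • Q) * ((1 : Matrix (Fin m) (Fin m) ℝ) + ε • B)⁻¹) = 1 := by
        rw [← mul_assoc, key ε hε, hinv1]
      have hAinv : (A + ε • (1 : Matrix (Fin m) (Fin m) ℝ))⁻¹
          = (B + ε⁻¹ • Q) * ((1 : Matrix (Fin m) (Fin m) ℝ) + ε • B)⁻¹ :=
        Matrix.inv_eq_right_inv hright
      have hQinv : Q * ((1 : Matrix (Fin m) (Fin m) ℝ) + ε • B)⁻¹ = Q := by
        have hq1 : Q * ((1 : Matrix (Fin m) (Fin m) ℝ) + ε • B) = Q := by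
          rw [mul_add, mul_one, Matrix.mul_smul, hQB, smul_zero, add_zero]
        calc Q * ((1 : Matrix (Fin m) (Fin m) ℝ) + ε • B)⁻¹
            = Q * ((1 : Matrix (Fin m) (Fin m) ℝ) + ε • B) *
              ((1 : Matrix (Fin m) (Fin m) ℝ) + ε • B)⁻¹ := by rw [hq1]
        _ = Q * (((1 : Matrix (Fin m) (Fin m) ℝ) + ε • B) *
              ((1 : Matrix (Fin m) (Fin m) ℝ) + ε • B)⁻¹) := by rw [mul_assoc]
        _ = Q := by rw [hinv1, mul_one]
      rw [hAinv, add_mul, Matrix.smul_mul, hQinv, add_sub_cancel_right]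
    have h1 : Tendsto (fun ε : ℝ => (1 : Matrix (Fin m) (Fin m) ℝ) + ε • B) (𝓝 0)
        (𝓝 (1 : Matrix (Fin m) (Fin m) ℝ)) := by
      have : Continuous fun ε : ℝ => (1 : Matrix (Fin m) (Fin m) ℝ) + ε • B :=
        continuous_const.add (continuous_id.smul continuous_const)
      simpa [ContinuousAt] using this.continuousAt (x := (0 : ℝ))
    have hca : ContinuousAt (fun M : Matrix (Fin m) (Fin m) ℝ => M⁻¹)
        (1 : Matrix (Fin m) (Fin m) ℝ) := by
      apply continuousAt_matrix_inv
      rw [Ring.inverse_eq_inv']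
      exact continuousAt_inv₀ (by simp)
    have hinvlim : Tendsto (fun ε : ℝ => ((1 : Matrix (Fin m) (Fin m) ℝ) + ε • B)⁻¹)
        (𝓝 0) (𝓝 ((1 : Matrix (Fin m) (Fin m) ℝ))⁻¹) := hca.tendsto.comp h1
    have hlim : Tendsto (fun ε : ℝ => B * ((1 : Matrix (Fin m) (Fin m) ℝ) + ε • B)⁻¹)
        (𝓝 0) (𝓝 (P * G * P)) := by
      have hone : ((1 : Matrix (Fin m) (Fin m) ℝ))⁻¹ = 1 :=
        Matrix.inv_eq_right_inv (by rw [one_mul])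
      have := (tendsto_const_nhds (x := B)).mul hinvlim
      simpa [hone, hBdef] using this
    exact ((hlim.mono_left nhdsWithin_le_nhds).congr' (heq.mono fun ε h => h.symm))
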